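/- With υ_∞(z) = log(8/(1+|z|²)²) and ω⁰_∞ as defined by the explicit formula (1/2)υ_∞² + 6 log(|y|²+1) + (2 log 8 − 10)/(|y|²+1) + ((|y|²−1)/(|y|²+1))(4∫_{|y|²}^∞ log(s+1)/(s(s+1)) ds − 2 log²(|y|²+1) − (1/2) log²8), one has (1/(8π)) ∫_{ℝ²} 8(1+|z|²)^{-2} [ (1/2)υ_∞(z)² − ω⁰_∞(z) ] dz = 3 − log 8. -/

import Mathlib

open MeasureTheory Real

/-- `υ_∞(z) = log(8/(1+|z|²)²)`. -/
noncomputable def upsilon (z : ℝ × ℝ) : ℝ :=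
  Real.log (8 / (1 + (z.1 ^ 2 + z.2 ^ 2)) ^ 2)

/-- The explicit function `ω⁰_∞`. -/
noncomputable def omega0 (y : ℝ × ℝ) : ℝ :=
  (1 / 2) * upsilon y ^ 2 + 6 * Real.log ((y.1 ^ 2 + y.2 ^ 2) + 1)
    + (2 * Real.log 8 - 10) / ((y.1 ^ 2 + y.2 ^ 2) + 1)
    + ((y.1 ^ 2 + y.2 ^ 2) - 1) / ((y.1 ^ 2 + y.2 ^ 2) + 1)
      * (4 * (∫ s in Set.Ioi (y.1 ^ 2 + y.2 ^ 2), Real.log (s + 1) / (s * (s + 1)))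
          - 2 * Real.log ((y.1 ^ 2 + y.2 ^ 2) + 1) ^ 2 - (1 / 2) * Real.log 8 ^ 2)

/-- The integrand of the inner improper integral. -/
noncomputable def phi0 (s : ℝ) : ℝ := Real.log (s + 1) / (s * (s + 1))

/-- `Iu t = ∫_{Ioi t} phi0`. -/
noncomputable def Iu (t : ℝ) : ℝ := ∫ s in Set.Ioi t, phi0 s

noncomputable def gg (t : ℝ) : ℝ :=
  4 * Iu t - 2 * Real.log (t + 1) ^ 2 - (1 / 2) * Real.log 8 ^ 2

/-- The radial profile of the integrand. -/
noncomputable def FF (t : ℝ) : ℝ :=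
  8 / (1 + t) ^ 2 *
    (-(6 * Real.log (t + 1) + (2 * Real.log 8 - 10) / (t + 1)
      + ((t - 1) / (t + 1)) * gg t))

/-- An explicit antiderivative of `FF` on `(0,∞)`. -/
noncomputable def HH (t : ℝ) : ℝ :=
  16 * (Real.log (t + 1) + 1) / (1 + t) + (8 * Real.log 8 - 40) / (1 + t) ^ 2
    + 8 * t * gg t / (1 + t) ^ 2

lemma phi0_measurable : Measurable phi0 := by
  unfold phi0
  exact (Real.measurable_log.comp (measurable_id.add_const 1)).div
    (measurable_id.mul (measurable_id.add_const 1))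

lemma phi0_nonneg {s : ℝ} (hs : 0 < s) : 0 ≤ phi0 s := by
  unfold phi0
  have h1 : (0:ℝ) ≤ Real.log (s + 1) := Real.log_nonneg (by linarith)
  positivity

lemma phi0_le_rpow {s : ℝ} (hs : 1 ≤ s) : phi0 s ≤ 2 * s ^ (-3/2 : ℝ) := by
  have hs0 : (0:ℝ) < s := by linarith
  have h1 : Real.log (s + 1) ≤ 2 * (s + 1) ^ (1/2 : ℝ) := by
    have := Real.log_le_rpow_div (x := s + 1) (by linarith) (by norm_num : (0:ℝ) < 1/2)
    linarith [this]
  have h2 : (s:ℝ) ^ (1/2 : ℝ) ≤ (s + 1) ^ (1/2 : ℝ) :=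
    Real.rpow_le_rpow (le_of_lt hs0) (by linarith) (by norm_num)
  have hsp : (0:ℝ) < s ^ (1/2 : ℝ) := Real.rpow_pos_of_pos hs0 _
  have hsp1 : (0:ℝ) < (s + 1) ^ (1/2 : ℝ) := Real.rpow_pos_of_pos (by linarith) _
  have hsq : (s + 1) ^ (1/2 : ℝ) * (s + 1) ^ (1/2 : ℝ) = s + 1 := by
    rw [← Real.rpow_add (by linarith)]; norm_num
  have e1 : s * s ^ (1/2 : ℝ) = s ^ (3/2 : ℝ) := by
    rw [← Real.rpow_one_add' (le_of_lt hs0) (by norm_num)]; norm_num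
  have e2 : (2:ℝ) * s ^ (-3/2 : ℝ) = 2 / s ^ (3/2 : ℝ) := by
    rw [show (-3/2 : ℝ) = -(3/2) by norm_num, Real.rpow_neg (le_of_lt hs0)]; ring
  have key : phi0 s ≤ 2 / (s * s ^ (1/2 : ℝ)) := by
    unfold phi0
    rw [div_le_div_iff₀ (by positivity) (by positivity)]
    nlinarith [mul_le_mul h1 (mul_le_mul_of_nonneg_left h2 (le_of_lt hs0))
      (by positivity) (by positivity), hsq, hsp, hsp1]
  calc phi0 s ≤ 2 / (s * s ^ (1/2 : ℝ)) := key
    _ = 2 * s ^ (-3/2 : ℝ) := by rw [e1, e2]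

lemma phi0_integrableOn_Ioi : IntegrableOn phi0 (Set.Ioi (0:ℝ)) := by
  have h1 : IntegrableOn phi0 (Set.Ioc (0:ℝ) 1) := by
    apply Measure.integrableOn_of_bounded (M := 1) (by simp)
      phi0_measurable.aestronglyMeasurable
    filter_upwards [ae_restrict_mem measurableSet_Ioc] with s hs
    rw [Real.norm_eq_abs, abs_of_nonneg (phi0_nonneg hs.1)]
    have hlog : Real.log (s + 1) ≤ s := by
      have := Real.log_le_sub_one_of_pos (x := s + 1) (by linarith [hs.1])
      linarith
    unfold phi0
    rw [div_le_one (by nlinarith [hs.1])]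
    nlinarith [hs.1]
  have h2 : IntegrableOn phi0 (Set.Ioi (1:ℝ)) := by
    have hmaj : IntegrableOn (fun s : ℝ => 2 * s ^ (-3/2 : ℝ)) (Set.Ioi 1) :=
      (integrableOn_Ioi_rpow_of_lt (by norm_num) one_pos).const_mul 2
    apply Integrable.mono hmaj phi0_measurable.aestronglyMeasurable.restrict
    filter_upwards [ae_restrict_mem measurableSet_Ioi] with s hs
    rw [Real.norm_eq_abs, Real.norm_eq_abs,
      abs_of_nonneg (phi0_nonneg (lt_trans one_pos hs)),
      abs_of_nonneg (mul_nonneg (by norm_num) (Real.rpow_nonneg (le_trans zero_le_one (le_of_lt hs)) _))]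
    exact phi0_le_rpow (le_of_lt hs)
  rw [show Set.Ioi (0:ℝ) = Set.Ioc 0 1 ∪ Set.Ioi 1 from
    (Set.Ioc_union_Ioi_eq_Ioi zero_le_one).symm]
  exact h1.union h2

lemma Iu_nonneg {t : ℝ} (ht : 0 ≤ t) : 0 ≤ Iu t := by
  apply setIntegral_nonneg measurableSet_Ioi
  intro s hs
  exact phi0_nonneg (lt_of_le_of_lt ht hs)

lemma Iu_le_Iu_zero {t : ℝ} (ht : 0 ≤ t) : Iu t ≤ Iu 0 := by
  apply setIntegral_mono_set phi0_integrableOn_Ioi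
  · filter_upwards [ae_restrict_mem measurableSet_Ioi] with s hs
    exact phi0_nonneg hs
  · exact HasSubset.Subset.eventuallyLE (Set.Ioi_subset_Ioi ht)

lemma Iu_eq_sub {t : ℝ} (ht : 0 ≤ t) : Iu t = Iu 0 - ∫ s in (0:ℝ)..t, phi0 s := by
  have hdisj : Disjoint (Set.Ioc (0:ℝ) t) (Set.Ioi t) := by
    apply Set.disjoint_left.2
    intro s hs hs'
    exact absurd hs.2 (not_le.2 hs')
  have hsplit : Iu 0 = (∫ s in Set.Ioc (0:ℝ) t, phi0 s) + Iu t := by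
    unfold Iu
    rw [← setIntegral_union hdisj measurableSet_Ioi
      (phi0_integrableOn_Ioi.mono_set Set.Ioc_subset_Ioi_self)
      (phi0_integrableOn_Ioi.mono_set (Set.Ioi_subset_Ioi ht)),
      Set.Ioc_union_Ioi_eq_Ioi ht]
  rw [intervalIntegral.integral_of_le ht]
  linarith

lemma phi0_continuousAt {t : ℝ} (ht : 0 < t) : ContinuousAt phi0 t := by
  unfold phi0
  apply ContinuousAt.div
  · exact (Real.continuousAt_log (by linarith)).comp
      ((continuous_id.add continuous_const).continuousAt)
  · exact (continuous_id.mul (continuous_id.add continuous_const)).continuousAt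
  · nlinarith

lemma Iu_hasDerivAt {t : ℝ} (ht : 0 < t) : HasDerivAt Iu (-phi0 t) t := by
  have hint : IntervalIntegrable phi0 volume 0 t :=
    (intervalIntegrable_iff_integrableOn_Ioc_of_le (le_of_lt ht)).2
      (phi0_integrableOn_Ioi.mono_set Set.Ioc_subset_Ioi_self)
  have hmeas : StronglyMeasurableAtFilter phi0 (nhds t) volume :=
    ⟨Set.univ, Filter.univ_mem, phi0_measurable.aestronglyMeasurable.restrict⟩
  have hder := intervalIntegral.integral_hasDerivAt_right hint hmeas (phi0_continuousAt ht)
  have hder2 : HasDerivAt (fun u : ℝ => Iu 0 - ∫ s in (0:ℝ)..u, phi0 s) (-phi0 t) t :=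
    hder.const_sub (Iu 0)
  apply hder2.congr_of_eventuallyEq
  filter_upwards [Ioi_mem_nhds ht] with u hu
  exact Iu_eq_sub (le_of_lt hu)

lemma Iu_continuousOn : ContinuousOn Iu (Set.Ici (0:ℝ)) := by
  intro t ht
  rcases eq_or_lt_of_le (Set.mem_Ici.1 ht) with h | h
  · subst h
    have hprim : ContinuousOn (fun x : ℝ => ∫ s in Set.Ioc (0:ℝ) x, phi0 s) (Set.Icc 0 1) :=
      intervalIntegral.continuousOn_primitive
        ((integrableOn_Icc_iff_integrableOn_Ioc).2
          (phi0_integrableOn_Ioi.mono_set Set.Ioc_subset_Ioi_self))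
    have hc : ContinuousWithinAt (fun x : ℝ => Iu 0 - ∫ s in Set.Ioc (0:ℝ) x, phi0 s)
        (Set.Icc 0 1) 0 :=
      (continuousWithinAt_const.sub (hprim 0 (by simp)))
    have hmem : Set.Icc (0:ℝ) 1 ∈ nhdsWithin 0 (Set.Ici 0) := by
      rw [show Set.Icc (0:ℝ) 1 = Set.Ici 0 ∩ Set.Iic 1 from (Set.Ici_inter_Iic).symm]
      exact Filter.inter_mem self_mem_nhdsWithin
        (mem_nhdsWithin_of_mem_nhds (Iic_mem_nhds one_pos))
    have hc2 : ContinuousWithinAt (fun x : ℝ => Iu 0 - ∫ s in Set.Ioc (0:ℝ) x, phi0 s)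
        (Set.Ici 0) 0 := hc.mono_of_mem_nhdsWithin hmem
    apply hc2.congr
    · intro u hu
      rw [Iu_eq_sub (Set.mem_Ici.1 hu), intervalIntegral.integral_of_le (Set.mem_Ici.1 hu)]
    · rw [Set.Ioc_self, Measure.restrict_empty, integral_zero_measure, sub_zero]
  · exact (Iu_hasDerivAt h).continuousAt.continuousWithinAt

lemma log_add_one_hasDerivAt {t : ℝ} (ht : -1 < t) :
    HasDerivAt (fun u : ℝ => Real.log (u + 1)) ((t + 1)⁻¹) t := by
  have h := (Real.hasDerivAt_log (by linarith : t + 1 ≠ 0)).comp t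
    ((hasDerivAt_id t).add_const 1)
  simpa [Function.comp_def] using h

lemma gg_hasDerivAt {t : ℝ} (ht : 0 < t) :
    HasDerivAt gg (-4 * Real.log (t + 1) / t) t := by
  have hlog := log_add_one_hasDerivAt (by linarith : (-1:ℝ) < t)
  have h2 : HasDerivAt (fun u : ℝ => Real.log (u + 1) ^ 2)
      (2 * Real.log (t + 1) * (t + 1)⁻¹) t := by
    have := hlog.fun_pow 2
    simpa [mul_comm, mul_assoc, mul_left_comm] using this
  have h3 := ((Iu_hasDerivAt ht).const_mul 4).sub (h2.const_mul 2)
  have h4 := h3.sub_const ((1 / 2) * Real.log 8 ^ 2)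
  have heq : 4 * -phi0 t - 2 * (2 * Real.log (t + 1) * (t + 1)⁻¹)
      = -4 * Real.log (t + 1) / t := by
    unfold phi0
    field_simp
    ring
  rw [heq] at h4
  exact h4

lemma HH_hasDerivAt {t : ℝ} (ht : 0 < t) : HasDerivAt HH (FF t) t := by
  have h1t : (1:ℝ) + t ≠ 0 := by linarith
  have h1t2 : ((1:ℝ) + t) ^ 2 ≠ 0 := pow_ne_zero _ h1t
  have hlog := log_add_one_hasDerivAt (by linarith : (-1:ℝ) < t)
  have hG := gg_hasDerivAt ht
  have hden : HasDerivAt (fun u : ℝ => 1 + u) 1 t := (hasDerivAt_id t).const_add 1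
  have hden2 : HasDerivAt (fun u : ℝ => (1 + u) ^ 2) (2 * (1 + t) ^ 1 * 1) t := hden.pow 2
  have hA : HasDerivAt (fun u : ℝ => 16 * (Real.log (u + 1) + 1) / (1 + u))
      ((16 * (t + 1)⁻¹ * (1 + t) - 16 * (Real.log (t + 1) + 1) * 1) / (1 + t) ^ 2) t :=
    ((hlog.add_const 1).const_mul 16).div hden h1t
  have hB : HasDerivAt (fun u : ℝ => (8 * Real.log 8 - 40) / (1 + u) ^ 2)
      ((0 * (1 + t) ^ 2 - (8 * Real.log 8 - 40) * (2 * (1 + t) ^ 1 * 1)) / ((1 + t) ^ 2) ^ 2)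
      t := (hasDerivAt_const t (8 * Real.log 8 - 40)).div hden2 h1t2
  have hC : HasDerivAt (fun u : ℝ => 8 * u * gg u / (1 + u) ^ 2)
      (((8 * 1 * gg t + 8 * t * (-4 * Real.log (t + 1) / t)) * (1 + t) ^ 2
          - 8 * t * gg t * (2 * (1 + t) ^ 1 * 1)) / ((1 + t) ^ 2) ^ 2) t :=
    (((hasDerivAt_id t).const_mul 8).mul hG).div hden2 h1t2
  have hsum := (hA.add hB).add hC
  have heq : (16 * (t + 1)⁻¹ * (1 + t) - 16 * (Real.log (t + 1) + 1) * 1) / (1 + t) ^ 2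
      + (0 * (1 + t) ^ 2 - (8 * Real.log 8 - 40) * (2 * (1 + t) ^ 1 * 1)) / ((1 + t) ^ 2) ^ 2
      + ((8 * 1 * gg t + 8 * t * (-4 * Real.log (t + 1) / t)) * (1 + t) ^ 2
          - 8 * t * gg t * (2 * (1 + t) ^ 1 * 1)) / ((1 + t) ^ 2) ^ 2 = FF t := by
    unfold FF
    have ht0 : t ≠ 0 := ne_of_gt ht
    have ht1 : t + 1 ≠ 0 := by linarith
    field_simp
    ring
  rw [heq] at hsum
  exact hsum

lemma ne_1t {t : ℝ} (ht : t ∈ Set.Ici (0:ℝ)) : (1:ℝ) + t ≠ 0 := by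
  simp only [Set.mem_Ici] at ht; positivity

lemma ne_t1 {t : ℝ} (ht : t ∈ Set.Ici (0:ℝ)) : t + (1:ℝ) ≠ 0 := by
  simp only [Set.mem_Ici] at ht; positivity

lemma logc_continuousOn : ContinuousOn (fun t : ℝ => Real.log (t + 1)) (Set.Ici (0:ℝ)) := by
  exact ContinuousOn.log (continuousOn_id.add continuousOn_const) (fun t ht => ne_t1 ht)

lemma gg_continuousOn : ContinuousOn gg (Set.Ici (0:ℝ)) := by
  unfold gg
  exact ((continuousOn_const.mul Iu_continuousOn).sub
    (continuousOn_const.mul (logc_continuousOn.pow 2))).sub continuousOn_const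

lemma FF_continuousOn : ContinuousOn FF (Set.Ici (0:ℝ)) := by
  unfold FF
  apply ContinuousOn.mul
  · exact continuousOn_const.div (by fun_prop) (fun t ht => pow_ne_zero 2 (ne_1t ht))
  · apply ContinuousOn.neg
    apply ContinuousOn.add
    · apply ContinuousOn.add
      · exact continuousOn_const.mul logc_continuousOn
      · exact continuousOn_const.div (by fun_prop) (fun t ht => ne_t1 ht)
    · exact (ContinuousOn.div (by fun_prop) (by fun_prop) (fun t ht => ne_t1 ht)).mul
        gg_continuousOn

lemma HH_continuousOn : ContinuousOn HH (Set.Ici (0:ℝ)) := by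
  unfold HH
  apply ContinuousOn.add
  · apply ContinuousOn.add
    · exact (continuousOn_const.mul (logc_continuousOn.add continuousOn_const)).div
        (by fun_prop) (fun t ht => ne_1t ht)
    · exact continuousOn_const.div (by fun_prop)
        (fun t ht => pow_ne_zero 2 (ne_1t ht))
  · exact ((continuousOn_const.mul continuousOn_id).mul gg_continuousOn).div
      (by fun_prop) (fun t ht => pow_ne_zero 2 (ne_1t ht))

/-- A crude constant dominating the tail of `FF`. -/
noncomputable def KK : ℝ :=
  8 * (56 + |2 * Real.log 8 - 10| + 4 * Iu 0 + Real.log 8 ^ 2 / 2)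

lemma KK_nonneg : 0 ≤ KK := by
  have := Iu_nonneg (le_refl (0:ℝ))
  unfold KK
  positivity

lemma FF_bound {t : ℝ} (ht : 1 ≤ t) : |FF t| ≤ KK * t ^ (-3/2 : ℝ) := by
  have h0t : (0:ℝ) < t := lt_of_lt_of_le one_pos ht
  have h1t : (0:ℝ) < 1 + t := by linarith
  set l := Real.log (t + 1) with hl
  have hl0 : 0 ≤ l := Real.log_nonneg (by linarith)
  have hone : (1:ℝ) ≤ (1 + t) ^ (1/2 : ℝ) := by
    have := Real.rpow_le_rpow (zero_le_one) (by linarith : (1:ℝ) ≤ 1 + t)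
      (by norm_num : (0:ℝ) ≤ 1/2)
    simpa using this
  have hl4 : l ≤ 4 * (1 + t) ^ (1/4 : ℝ) := by
    have h := Real.log_le_rpow_div (le_of_lt h1t) (by norm_num : (0:ℝ) < 1/4)
    rw [hl, show t + 1 = 1 + t by ring]
    linarith
  have h44 : (1 + t) ^ (1/4 : ℝ) ≤ (1 + t) ^ (1/2 : ℝ) :=
    Real.rpow_le_rpow_of_exponent_le (by linarith) (by norm_num)
  have hl2 : l ≤ 4 * (1 + t) ^ (1/2 : ℝ) := by linarith
  have h4sq : (1 + t) ^ (1/4 : ℝ) * (1 + t) ^ (1/4 : ℝ) = (1 + t) ^ (1/2 : ℝ) := by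
    rw [← Real.rpow_add h1t]; norm_num
  have hlsq : l ^ 2 ≤ 16 * (1 + t) ^ (1/2 : ℝ) := by
    nlinarith [Real.rpow_pos_of_pos h1t (1/4 : ℝ)]
  have hIu0 : 0 ≤ Iu 0 := Iu_nonneg le_rfl
  have hIub : |Iu t| ≤ Iu 0 :=
    abs_le.2 ⟨by linarith [Iu_nonneg (le_of_lt h0t)], Iu_le_Iu_zero (le_of_lt h0t)⟩
  have hgg : |gg t| ≤ 4 * Iu 0 + 2 * l ^ 2 + Real.log 8 ^ 2 / 2 := by
    unfold gg
    calc |4 * Iu t - 2 * Real.log (t + 1) ^ 2 - 1 / 2 * Real.log 8 ^ 2|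
        ≤ |4 * Iu t| + |2 * Real.log (t + 1) ^ 2| + |1 / 2 * Real.log 8 ^ 2| :=
          (abs_sub _ _).trans (add_le_add_left (abs_sub _ _) _)
      _ ≤ 4 * Iu 0 + 2 * l ^ 2 + Real.log 8 ^ 2 / 2 := by
          rw [abs_mul, abs_mul, abs_mul]
          simp only [abs_of_nonneg (by norm_num : (0:ℝ) ≤ 4),
            abs_of_nonneg (by norm_num : (0:ℝ) ≤ 2),
            abs_of_nonneg (by norm_num : (0:ℝ) ≤ (1:ℝ)/2)]
          have h1 : |Real.log (t + 1) ^ 2| = l ^ 2 := by rw [← hl, abs_of_nonneg (sq_nonneg _)]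
          have h2 : |Real.log 8 ^ 2| = Real.log 8 ^ 2 := abs_of_nonneg (sq_nonneg _)
          rw [h1, h2]
          nlinarith [hIub]
  have hfrac : |(t - 1) / (t + 1)| ≤ 1 := by
    rw [abs_div, abs_of_nonneg (by linarith : (0:ℝ) ≤ t - 1),
      abs_of_nonneg (by linarith : (0:ℝ) ≤ t + 1)]
    rw [div_le_one (by linarith)]
    linarith
  have hmain : |FF t| ≤ 8 / (1 + t) ^ 2 *
      (6 * l + |2 * Real.log 8 - 10| + (4 * Iu 0 + 2 * l ^ 2 + Real.log 8 ^ 2 / 2)) := by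
    unfold FF
    rw [abs_mul, abs_of_nonneg (by positivity : (0:ℝ) ≤ 8 / (1 + t) ^ 2), abs_neg]
    apply mul_le_mul_of_nonneg_left _ (by positivity)
    calc |6 * Real.log (t + 1) + (2 * Real.log 8 - 10) / (t + 1) + (t - 1) / (t + 1) * gg t|
        ≤ |6 * Real.log (t + 1)| + |(2 * Real.log 8 - 10) / (t + 1)|
            + |(t - 1) / (t + 1) * gg t| :=
          (abs_add_le _ _).trans (add_le_add_left (abs_add_le _ _) _)
      _ ≤ 6 * l + |2 * Real.log 8 - 10| + (4 * Iu 0 + 2 * l ^ 2 + Real.log 8 ^ 2 / 2) := by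
          have e1 : |6 * Real.log (t + 1)| = 6 * l := by
            rw [abs_mul, ← hl, abs_of_nonneg (by norm_num : (0:ℝ) ≤ 6), abs_of_nonneg hl0]
          have e2 : |(2 * Real.log 8 - 10) / (t + 1)| ≤ |2 * Real.log 8 - 10| := by
            rw [abs_div, abs_of_nonneg (by linarith : (0:ℝ) ≤ t + 1)]
            exact div_le_self (abs_nonneg _) (by linarith)
          have e3 : |(t - 1) / (t + 1) * gg t| ≤ 4 * Iu 0 + 2 * l ^ 2 + Real.log 8 ^ 2 / 2 := by
            rw [abs_mul]
            calc |(t - 1) / (t + 1)| * |gg t| ≤ 1 * |gg t| :=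
                  mul_le_mul_of_nonneg_right hfrac (abs_nonneg _)
              _ = |gg t| := one_mul _
              _ ≤ _ := hgg
          linarith
  have hnum : 6 * l + |2 * Real.log 8 - 10| + (4 * Iu 0 + 2 * l ^ 2 + Real.log 8 ^ 2 / 2)
      ≤ (56 + |2 * Real.log 8 - 10| + 4 * Iu 0 + Real.log 8 ^ 2 / 2) * (1 + t) ^ (1/2 : ℝ) := by
    nlinarith [hone, abs_nonneg (2 * Real.log 8 - 10), hIu0, sq_nonneg (Real.log 8), hl2, hlsq, hl0]
  have hpow : ((1 + t) : ℝ) ^ (-3/2 : ℝ) = (1 + t) ^ (1/2 : ℝ) / (1 + t) ^ 2 := by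
    rw [show (-3/2 : ℝ) = 1/2 - 2 by norm_num, Real.rpow_sub h1t]
    rw [show ((2:ℝ)) = ((2:ℕ) : ℝ) by norm_num, Real.rpow_natCast]
  have hKK : |FF t| ≤ KK * (1 + t) ^ (-3/2 : ℝ) := by
    calc |FF t| ≤ 8 / (1 + t) ^ 2 *
        (6 * l + |2 * Real.log 8 - 10| + (4 * Iu 0 + 2 * l ^ 2 + Real.log 8 ^ 2 / 2)) := hmain
      _ ≤ 8 / (1 + t) ^ 2 *
          ((56 + |2 * Real.log 8 - 10| + 4 * Iu 0 + Real.log 8 ^ 2 / 2) * (1 + t) ^ (1/2 : ℝ)) :=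
          mul_le_mul_of_nonneg_left hnum (by positivity)
      _ = KK * (1 + t) ^ (-3/2 : ℝ) := by
          rw [hpow]; unfold KK; field_simp
  refine hKK.trans (mul_le_mul_of_nonneg_left ?_ KK_nonneg)
  exact Real.rpow_le_rpow_of_nonpos h0t (by linarith) (by norm_num)

lemma FF_integrableOn : IntegrableOn FF (Set.Ioi (0:ℝ)) := by
  have h1 : IntegrableOn FF (Set.Ioc (0:ℝ) 1) :=
    ((FF_continuousOn.mono (Set.Icc_subset_Ici_self)).integrableOn_Icc).mono_set
      Set.Ioc_subset_Icc_self
  have h2 : IntegrableOn FF (Set.Ioi (1:ℝ)) := by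
    have hmaj : IntegrableOn (fun s : ℝ => KK * s ^ (-3/2 : ℝ)) (Set.Ioi 1) :=
      (integrableOn_Ioi_rpow_of_lt (by norm_num) one_pos).const_mul KK
    apply Integrable.mono hmaj
      ((FF_continuousOn.mono (fun s hs => Set.mem_Ici.2 (le_of_lt (lt_of_lt_of_le one_pos (le_of_lt hs))) :
        Set.Ioi (1:ℝ) ⊆ Set.Ici 0)).aestronglyMeasurable measurableSet_Ioi)
    filter_upwards [ae_restrict_mem measurableSet_Ioi] with s hs
    rw [Real.norm_eq_abs, Real.norm_eq_abs]
    refine (FF_bound (le_of_lt hs)).trans (le_abs_self _)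
  rw [show Set.Ioi (0:ℝ) = Set.Ioc 0 1 ∪ Set.Ioi 1 from
    (Set.Ioc_union_Ioi_eq_Ioi zero_le_one).symm]
  exact h1.union h2

lemma gg_abs_le {t : ℝ} (ht : 0 ≤ t) :
    |gg t| ≤ 4 * Iu 0 + 2 * Real.log (t + 1) ^ 2 + Real.log 8 ^ 2 / 2 := by
  have hIub : |Iu t| ≤ Iu 0 := abs_le.2
    ⟨by linarith [Iu_nonneg ht, Iu_nonneg (le_refl (0:ℝ))], Iu_le_Iu_zero ht⟩
  unfold gg
  calc |4 * Iu t - 2 * Real.log (t + 1) ^ 2 - 1 / 2 * Real.log 8 ^ 2|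
      ≤ |4 * Iu t| + |2 * Real.log (t + 1) ^ 2| + |1 / 2 * Real.log 8 ^ 2| :=
        (abs_sub _ _).trans (add_le_add_left (abs_sub _ _) _)
    _ ≤ 4 * Iu 0 + 2 * Real.log (t + 1) ^ 2 + Real.log 8 ^ 2 / 2 := by
        rw [abs_mul, abs_mul, abs_mul, abs_of_nonneg (sq_nonneg (Real.log (t+1))),
          abs_of_nonneg (sq_nonneg (Real.log 8))]
        simp only [abs_of_nonneg (by norm_num : (0:ℝ) ≤ 4),
          abs_of_nonneg (by norm_num : (0:ℝ) ≤ 2),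
          abs_of_nonneg (by norm_num : (0:ℝ) ≤ (1:ℝ)/2)]
        nlinarith [hIub]

lemma tendsto_logpow_div (n : ℕ) :
    Filter.Tendsto (fun t : ℝ => Real.log (t + 1) ^ n / (1 + t)) Filter.atTop (nhds 0) := by
  have h := (Real.tendsto_pow_log_div_mul_add_atTop 1 0 n one_ne_zero).comp
    (Filter.tendsto_atTop_add_const_right Filter.atTop 1 Filter.tendsto_id)
  refine h.congr (fun t => ?_)
  simp only [Function.comp_apply, Filter.tendsto_id, one_mul, add_zero, id_eq]
  rw [add_comm t 1]

lemma HH_tendsto : Filter.Tendsto HH Filter.atTop (nhds 0) := by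
  set c1 : ℝ := 16 + |8 * Real.log 8 - 40| + 32 * Iu 0 + 4 * Real.log 8 ^ 2 with hc1
  have hsh : Filter.Tendsto (fun t : ℝ => 1 + t) Filter.atTop Filter.atTop :=
    Filter.tendsto_atTop_add_const_left _ 1 Filter.tendsto_id
  have t0 : Filter.Tendsto (fun t : ℝ => c1 / (1 + t)) Filter.atTop (nhds 0) :=
    Filter.Tendsto.div_atTop tendsto_const_nhds hsh
  have t1 := (tendsto_logpow_div 1).const_mul (16:ℝ)
  have t2 := (tendsto_logpow_div 2).const_mul (16:ℝ)
  have hg : Filter.Tendsto (fun t : ℝ => c1 / (1 + t) + 16 * (Real.log (t + 1) ^ 1 / (1 + t))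
      + 16 * (Real.log (t + 1) ^ 2 / (1 + t))) Filter.atTop (nhds 0) := by
    have := (t0.add t1).add t2
    simpa using this
  apply squeeze_zero_norm' _ hg
  filter_upwards [Filter.eventually_ge_atTop (1:ℝ)] with t ht
  have hl0 : 0 ≤ Real.log (t + 1) := Real.log_nonneg (by linarith)
  have h1t : (0:ℝ) < 1 + t := by linarith
  have hgg := gg_abs_le (by linarith : (0:ℝ) ≤ t)
  have habs : ‖HH t‖ ≤ 16 * (Real.log (t + 1) + 1) / (1 + t)
      + |8 * Real.log 8 - 40| / (1 + t) ^ 2 + 8 * t * |gg t| / (1 + t) ^ 2 := by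
    rw [Real.norm_eq_abs]
    unfold HH
    have e1 : |16 * (Real.log (t + 1) + 1)| = 16 * (Real.log (t + 1) + 1) :=
      abs_of_nonneg (by linarith)
    have e2 : |8 * t * gg t| = 8 * t * |gg t| := by
      rw [abs_mul, abs_of_nonneg (by linarith : (0:ℝ) ≤ 8 * t)]
    calc |16 * (Real.log (t + 1) + 1) / (1 + t) + (8 * Real.log 8 - 40) / (1 + t) ^ 2
          + 8 * t * gg t / (1 + t) ^ 2|
        ≤ |16 * (Real.log (t + 1) + 1) / (1 + t)| + |(8 * Real.log 8 - 40) / (1 + t) ^ 2|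
          + |8 * t * gg t / (1 + t) ^ 2| :=
          (abs_add_le _ _).trans (add_le_add_left (abs_add_le _ _) _)
      _ = 16 * (Real.log (t + 1) + 1) / (1 + t) + |8 * Real.log 8 - 40| / (1 + t) ^ 2
          + 8 * t * |gg t| / (1 + t) ^ 2 := by
          rw [abs_div, abs_div, abs_div, abs_of_pos h1t,
            abs_of_pos (by positivity : (0:ℝ) < (1 + t) ^ 2), e1, e2]
  refine habs.trans ?_
  have hB : |8 * Real.log 8 - 40| / (1 + t) ^ 2 ≤ |8 * Real.log 8 - 40| / (1 + t) := by
    rw [div_le_div_iff₀ (by positivity) (by positivity)]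
    nlinarith [mul_nonneg (mul_nonneg (abs_nonneg (8 * Real.log 8 - 40)) (le_of_lt h1t))
      (by linarith : (0:ℝ) ≤ t)]
  have hC : 8 * t * |gg t| / (1 + t) ^ 2
      ≤ (32 * Iu 0 + 16 * Real.log (t + 1) ^ 2 + 4 * Real.log 8 ^ 2) / (1 + t) := by
    rw [div_le_div_iff₀ (by positivity) (by positivity)]
    nlinarith [hgg, abs_nonneg (gg t), Iu_nonneg (le_refl (0:ℝ)), sq_nonneg (Real.log 8),
      sq_nonneg (Real.log (t + 1)), mul_nonneg (abs_nonneg (gg t)) (le_of_lt h1t)]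
  have heq : c1 / (1 + t) + 16 * (Real.log (t + 1) ^ 1 / (1 + t))
      + 16 * (Real.log (t + 1) ^ 2 / (1 + t))
      = 16 * (Real.log (t + 1) + 1) / (1 + t) + |8 * Real.log 8 - 40| / (1 + t)
        + (32 * Iu 0 + 16 * Real.log (t + 1) ^ 2 + 4 * Real.log 8 ^ 2) / (1 + t) := by
    rw [hc1]; ring
  rw [heq]
  linarith [hB, hC]

lemma HH_continuousWithinAt : ContinuousWithinAt HH (Set.Ici (0:ℝ)) 0 :=
  HH_continuousOn 0 Set.self_mem_Ici

lemma integral_FF : ∫ t in Set.Ioi (0:ℝ), FF t = 24 - 8 * Real.log 8 := by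
  have h0 : HH 0 = 8 * Real.log 8 - 24 := by
    simp [HH, gg]
    ring
  rw [MeasureTheory.integral_Ioi_of_hasDerivAt_of_tendsto HH_continuousWithinAt
    (fun x hx => HH_hasDerivAt hx) FF_integrableOn HH_tendsto, h0]
  ring

theorem stmt17 :
    (1 / (8 * π)) * ∫ z : ℝ × ℝ,
        8 / (1 + (z.1 ^ 2 + z.2 ^ 2)) ^ 2 * ((1 / 2) * upsilon z ^ 2 - omega0 z)
      = 3 - Real.log 8 := by
  have hfun : (fun z : ℝ × ℝ => 8 / (1 + (z.1 ^ 2 + z.2 ^ 2)) ^ 2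
      * ((1 / 2) * upsilon z ^ 2 - omega0 z)) = fun z => FF (z.1 ^ 2 + z.2 ^ 2) := by
    funext z
    simp only [upsilon, omega0, FF, gg, Iu, phi0]
    ring
  rw [hfun]
  rw [← integral_comp_polarCoord_symm (fun z => FF (z.1 ^ 2 + z.2 ^ 2))]
  have hpol : Set.EqOn (fun p : ℝ × ℝ =>
        p.1 • FF ((polarCoord.symm p).1 ^ 2 + (polarCoord.symm p).2 ^ 2))
      (fun p : ℝ × ℝ => (fun r => r * FF (r ^ 2)) p.1 * (fun _ : ℝ => (1:ℝ)) p.2)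
      polarCoord.target := by
    intro p hp
    simp only [polarCoord_symm_apply, smul_eq_mul, mul_one]
    congr 2
    rw [mul_pow, mul_pow, ← mul_add, Real.cos_sq_add_sin_sq, mul_one]
  rw [setIntegral_congr_fun (polarCoord.open_target.measurableSet) hpol]
  rw [polarCoord_target, Measure.volume_eq_prod]
  have hprod := MeasureTheory.setIntegral_prod_mul (μ := (volume : Measure ℝ))
    (ν := (volume : Measure ℝ)) (fun r : ℝ => r * FF (r ^ 2)) (fun _ : ℝ => (1:ℝ))
    (Set.Ioi 0) (Set.Ioo (-π) π)
  rw [hprod]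
  have hθ : (∫ _ in Set.Ioo (-π) π, (1:ℝ)) = 2 * π := by
    simp [Real.volume_Ioo]
    rw [max_eq_left (by linarith [Real.pi_pos])]
    ring
  have hsub : (∫ r in Set.Ioi (0:ℝ), r * FF (r ^ 2))
      = (1 / 2) * ∫ t in Set.Ioi (0:ℝ), FF t := by
    rw [← integral_comp_rpow_Ioi FF (two_ne_zero), ← MeasureTheory.integral_const_mul]
    apply setIntegral_congr_fun measurableSet_Ioi
    intro r hr
    have hr0 : (0:ℝ) < r := hr
    simp only [smul_eq_mul]
    rw [show ((2:ℝ) - 1) = 1 by norm_num, Real.rpow_one,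
      show ((2:ℝ)) = ((2:ℕ) : ℝ) by norm_num, Real.rpow_natCast]
    rw [show |((2:ℕ):ℝ)| = ((2:ℕ):ℝ) from abs_of_nonneg (by norm_num)]
    push_cast
    ring
  rw [hθ, hsub, integral_FF]
  have hπ : π ≠ 0 := ne_of_gt Real.pi_pos
  field_simp
  ring
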